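/- Let f : M → N be a smooth map between smooth manifolds, and for k = 0, 1, 2, … define inductively the open sets X_k ⊆ M: X_1 is the set of points where rank df attains its maximum r_1 over M; given X_1, …, X_k, let X_{k+1} be the set of points in M \ (closure of X_1 ∪ … ∪ X_k) where rank df attains its maximum over that set. Then the maximal ranks r_1 > r_2 > … are strictly decreasing, the process terminates after finitely many steps, and M equals the union of the closures of the X_k. -/

import Mathlib

open Manifold Set Module

/-- (Stratification by rank.)  Let `f : M → N` be a smooth map
between finite-dimensional smooth manifolds and let `rk x` denote the rank of `df_x`.
Define inductively `X k` as the set of points of `R k := M \ closure (X 0 ∪ ⋯ ∪ X (k-1))`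
where `rk` attains its maximum over `R k`.  Then the ranks along consecutive nonempty
strata strictly decrease, the process terminates after finitely many steps, and `M` is
the union of the closures of the `X k`. -/
theorem rank_stratification
    {E : Type*} [NormedAddCommGroup E] [NormedSpace ℝ E] [FiniteDimensional ℝ E]
    {H : Type*} [TopologicalSpace H] {I : ModelWithCorners ℝ E H}
    {M : Type*} [TopologicalSpace M] [ChartedSpace H M] [IsManifold I (⊤ : ℕ∞) M]
    {E' : Type*} [NormedAddCommGroup E'] [NormedSpace ℝ E'] [FiniteDimensional ℝ E']
    {H' : Type*} [TopologicalSpace H'] {I' : ModelWithCorners ℝ E' H'}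
    {N : Type*} [TopologicalSpace N] [ChartedSpace H' N] [IsManifold I' (⊤ : ℕ∞) N]
    (f : M → N) (hf : ContMDiff I I' (⊤ : ℕ∞) f)
    (rk : M → ℕ)
    (hrk : ∀ x : M, rk x = finrank ℝ (LinearMap.range (mfderiv I I' f x : TangentSpace I x →ₗ[ℝ] TangentSpace I' (f x))))
    (X : ℕ → Set M)
    (hX : ∀ k : ℕ, X k =
      {x : M | x ∈ (Set.univ \ closure (⋃ j < k, X j)) ∧
        ∀ y ∈ (Set.univ \ closure (⋃ j < k, X j)), rk y ≤ rk x}) :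
    (∀ k : ℕ, ∀ x ∈ X k, ∀ y ∈ X (k + 1), rk y < rk x) ∧
    (∃ K : ℕ, ∀ k : ℕ, K ≤ k → X k = ∅) ∧
    (⋃ k : ℕ, closure (X k)) = Set.univ := by
  -- notation for the "remaining" sets
  set R : ℕ → Set M := fun k => Set.univ \ closure (⋃ j < k, X j) with hR
  -- ranks are bounded by the dimension of E'
  have hbound : ∀ x : M, rk x ≤ finrank ℝ E' := by
    intro x
    rw [hrk x]
    haveI : FiniteDimensional ℝ (TangentSpace I' (f x)) := ‹FiniteDimensional ℝ E'›
    exact Submodule.finrank_le (LinearMap.range (mfderiv I I' f x : TangentSpace I x →ₗ[ℝ] TangentSpace I' (f x)))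
  set D := finrank ℝ E' with hD
  -- membership characterization
  have hmem : ∀ k x, x ∈ X k ↔ x ∈ R k ∧ ∀ y ∈ R k, rk y ≤ rk x := by
    intro k x
    rw [hX k]; rfl
  -- R is antitone in k (by one step)
  have hRstep : ∀ k, R (k + 1) ⊆ R k := by
    intro k x hx
    refine ⟨trivial, fun hc => hx.2 ?_⟩
    refine closure_mono ?_ hc
    exact Set.iUnion₂_mono' fun j hj => ⟨j, Nat.lt_succ_of_lt hj, subset_rfl⟩
  -- Part 1: strict decrease of ranks
  have part1 : ∀ k : ℕ, ∀ x ∈ X k, ∀ y ∈ X (k + 1), rk y < rk x := by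
    intro k x hx y hy
    rw [hmem] at hx hy
    have hyR : y ∈ R k := hRstep k hy.1
    refine lt_of_le_of_ne (hx.2 y hyR) fun hne => ?_
    -- then y would be a max over R k, hence y ∈ X k, contradicting y ∈ R (k+1)
    have hyX : y ∈ X k := (hmem k y).2 ⟨hyR, fun z hz => (hx.2 z hz).trans hne.ge⟩
    have : y ∈ closure (⋃ j < k + 1, X j) :=
      subset_closure (Set.mem_iUnion₂.2 ⟨k, Nat.lt_succ_self k, hyX⟩)
    exact hy.1.2 this
  -- once empty, stays empty
  have hstep : ∀ k, X k = ∅ → X (k + 1) = ∅ := by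
    intro k hk
    have hU : (⋃ j < k + 1, X j) = ⋃ j < k, X j := by
      apply Set.Subset.antisymm
      · intro z hz
        rcases Set.mem_iUnion₂.1 hz with ⟨j, hj, hzj⟩
        rcases Nat.lt_succ_iff_lt_or_eq.1 hj with hj' | rfl
        · exact Set.mem_iUnion₂.2 ⟨j, hj', hzj⟩
        · simp [hk] at hzj
      · exact Set.iUnion₂_mono' fun j hj => ⟨j, Nat.lt_succ_of_lt hj, subset_rfl⟩
    have : X (k + 1) = X k := by
      rw [hX (k + 1), hX k, hU]
    rw [this, hk]
  -- the rank on X k is at most D - k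
  have hrank : ∀ k : ℕ, ∀ x ∈ X k, rk x + k ≤ D := by
    intro k
    induction k with
    | zero => intro x _; simpa using hbound x
    | succ k ih =>
      intro x hx
      -- X k must be nonempty
      rcases Set.eq_empty_or_nonempty (X k) with hk | ⟨y, hy⟩
      · rw [hstep k hk] at hx; exact absurd hx (Set.notMem_empty x)
      · have h1 : rk x < rk y := part1 k y hy x hx
        have h2 := ih y hy
        omega
  -- Part 2: termination
  have hempty : ∀ k : ℕ, D + 1 ≤ k → X k = ∅ := by
    have base : X (D + 1) = ∅ := by
      rw [Set.eq_empty_iff_forall_notMem]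
      intro x hx
      have := hrank (D + 1) x hx
      omega
    intro k hk
    obtain ⟨m, rfl⟩ := Nat.exists_eq_add_of_le hk
    induction m with
    | zero => exact base
    | succ m ih => exact hstep _ (ih (by omega))
  refine ⟨part1, ⟨D + 1, hempty⟩, ?_⟩
  -- Part 3: the closures cover M
  rw [Set.eq_univ_iff_forall]
  intro x
  by_contra hx
  rw [Set.mem_iUnion] at hx
  push_neg at hx
  -- x belongs to every R k
  have hxR : ∀ k, x ∈ R k := by
    intro k
    refine ⟨trivial, fun hc => ?_⟩
    rw [closure_iUnion₂_lt_nat] at hc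
    rcases Set.mem_iUnion₂.1 hc with ⟨j, _, hj⟩
    exact hx j hj
  -- then R (D+1) is nonempty, so X (D+1) is nonempty, contradiction
  set S : Set ℕ := rk '' R (D + 1) with hS
  have hSne : S.Nonempty := ⟨rk x, x, hxR (D + 1), rfl⟩
  have hSbdd : BddAbove S := ⟨D, by rintro n ⟨y, _, rfl⟩; exact hbound y⟩
  obtain ⟨x', hx'R, hx'⟩ := Nat.sSup_mem hSne hSbdd
  have hx'X : x' ∈ X (D + 1) := by
    refine (hmem (D + 1) x').2 ⟨hx'R, fun y hy => ?_⟩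
    rw [hx']
    exact le_csSup hSbdd ⟨y, hy, rfl⟩
  rw [hempty (D + 1) le_rfl] at hx'X
  exact hx'X
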